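/- Let (X,d) be a metric space, let ε ≥ 0, and for i = 1,2 let η_i : [0,T_i] → X be unit-speed geodesics (T_i ≥ 0). Suppose the Hausdorff distance between the images η₁([0,T₁]) and η₂([0,T₂]) is at most ε. Then |T₁ − T₂| ≤ 2ε, and moreover at least one of the following holds: (i) d(η₁(0),η₂(0)) ≤ 5ε and d(η₁(T₁),η₂(T₂)) ≤ 5ε, or (ii) d(η₁(0),η₂(T₂)) ≤ 5ε and d(η₁(T₁),η₂(0)) ≤ 5ε (i.e. the endpoint bounds hold after possibly reversing the time parametrization of η₂). -/

import Mathlib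

/-- A unit-speed geodesic `η : [0,T] → X`: `dist (η s) (η t) = |s - t|` for `s, t ∈ [0,T]`. -/
def IsUnitSpeedGeodesic {X : Type*} [MetricSpace X] (η : ℝ → X) (T : ℝ) : Prop :=
  ∀ s ∈ Set.Icc (0 : ℝ) T, ∀ t ∈ Set.Icc (0 : ℝ) T, dist (η s) (η t) = |s - t|

/-- Auxiliary: if each geodesic image is pointwise within `ε` of the other image, then the
length bound and endpoint bounds (in min/max form) hold. -/
lemma geodesics_near_aux {X : Type*} [MetricSpace X] (ε T₁ T₂ : ℝ)
    (hT₁ : 0 ≤ T₁) (hT₂ : 0 ≤ T₂) (η₁ η₂ : ℝ → X)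
    (h₁ : IsUnitSpeedGeodesic η₁ T₁) (h₂ : IsUnitSpeedGeodesic η₂ T₂)
    (near₁ : ∀ s ∈ Set.Icc (0:ℝ) T₁, ∃ t ∈ Set.Icc (0:ℝ) T₂, dist (η₁ s) (η₂ t) ≤ ε)
    (near₂ : ∀ t ∈ Set.Icc (0:ℝ) T₂, ∃ s ∈ Set.Icc (0:ℝ) T₁, dist (η₂ t) (η₁ s) ≤ ε) :
    |T₁ - T₂| ≤ 2 * ε ∧
      min (max (dist (η₁ 0) (η₂ 0)) (dist (η₁ T₁) (η₂ T₂)))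
          (max (dist (η₁ 0) (η₂ T₂)) (dist (η₁ T₁) (η₂ 0))) ≤ 5 * ε := by
  have m0 : (0:ℝ) ∈ Set.Icc (0:ℝ) T₁ := ⟨le_refl _, hT₁⟩
  have mT : T₁ ∈ Set.Icc (0:ℝ) T₁ := ⟨hT₁, le_refl _⟩
  have n0 : (0:ℝ) ∈ Set.Icc (0:ℝ) T₂ := ⟨le_refl _, hT₂⟩
  have nT : T₂ ∈ Set.Icc (0:ℝ) T₂ := ⟨hT₂, le_refl _⟩
  obtain ⟨t₀, ht₀, hd₀⟩ := near₁ 0 m0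
  obtain ⟨t₁, ht₁, hd₁⟩ := near₁ T₁ mT
  obtain ⟨s₀, hs₀, he₀⟩ := near₂ 0 n0
  obtain ⟨s₁, hs₁, he₁⟩ := near₂ T₂ nT
  -- basic geodesic evaluations
  have g1 : dist (η₁ 0) (η₁ T₁) = T₁ := by
    rw [h₁ 0 m0 T₁ mT]; rw [abs_of_nonpos (by linarith)]; ring
  have g2 : dist (η₂ t₀) (η₂ t₁) = |t₀ - t₁| := h₂ t₀ ht₀ t₁ ht₁
  have g3 : dist (η₁ s₀) (η₁ s₁) = |s₀ - s₁| := h₁ s₀ hs₀ s₁ hs₁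
  have g4 : dist (η₂ 0) (η₂ T₂) = T₂ := by
    rw [h₂ 0 n0 T₂ nT]; rw [abs_of_nonpos (by linarith)]; ring
  -- |T₁ - T₂| ≤ 2ε
  have tri1 : dist (η₁ 0) (η₁ T₁) ≤
      dist (η₁ 0) (η₂ t₀) + dist (η₂ t₀) (η₂ t₁) + dist (η₂ t₁) (η₁ T₁) :=
    dist_triangle4 _ _ _ _
  have tri2 : dist (η₂ 0) (η₂ T₂) ≤
      dist (η₂ 0) (η₁ s₀) + dist (η₁ s₀) (η₁ s₁) + dist (η₁ s₁) (η₂ T₂) :=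
    dist_triangle4 _ _ _ _
  have habs1 : |t₀ - t₁| ≤ T₂ := by
    rw [abs_le]; constructor <;> [linarith [ht₀.1, ht₀.2, ht₁.1, ht₁.2]; linarith [ht₀.1, ht₀.2, ht₁.1, ht₁.2]]
  have habs2 : |s₀ - s₁| ≤ T₁ := by
    rw [abs_le]; constructor <;> [linarith [hs₀.1, hs₀.2, hs₁.1, hs₁.2]; linarith [hs₀.1, hs₀.2, hs₁.1, hs₁.2]]
  have hd₁' : dist (η₂ t₁) (η₁ T₁) ≤ ε := by rw [dist_comm]; exact hd₁
  have he₁' : dist (η₁ s₁) (η₂ T₂) ≤ ε := by rw [dist_comm]; exact he₁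
  have hT12 : T₁ ≤ T₂ + 2 * ε := by
    rw [g1] at tri1; rw [g2] at tri1; linarith
  have hT21 : T₂ ≤ T₁ + 2 * ε := by
    rw [g4] at tri2; rw [g3] at tri2
    have he₀' : dist (η₂ 0) (η₁ s₀) ≤ ε := he₀
    linarith
  refine ⟨by rw [abs_le]; constructor <;> linarith, ?_⟩
  -- lower bound on |t₀ - t₁|
  have hlow : T₁ - 2 * ε ≤ |t₀ - t₁| := by
    rw [g1] at tri1; rw [g2] at tri1; linarith
  have g5 : dist (η₂ t₀) (η₂ 0) = t₀ := by
    rw [h₂ t₀ ht₀ 0 n0, abs_of_nonneg (by linarith [ht₀.1])]; ring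
  have g6 : dist (η₂ t₁) (η₂ T₂) = T₂ - t₁ := by
    rw [h₂ t₁ ht₁ T₂ nT, abs_of_nonpos (by linarith [ht₁.2])]; ring
  have g7 : dist (η₂ t₀) (η₂ T₂) = T₂ - t₀ := by
    rw [h₂ t₀ ht₀ T₂ nT, abs_of_nonpos (by linarith [ht₀.2])]; ring
  have g8 : dist (η₂ t₁) (η₂ 0) = t₁ := by
    rw [h₂ t₁ ht₁ 0 n0, abs_of_nonneg (by linarith [ht₁.1])]; ring
  rcases le_total t₀ t₁ with hc | hc
  · -- same orientation: left of min
    rw [abs_of_nonpos (by linarith)] at hlow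
    refine min_le_of_left_le (max_le ?_ ?_)
    · calc dist (η₁ 0) (η₂ 0) ≤ dist (η₁ 0) (η₂ t₀) + dist (η₂ t₀) (η₂ 0) := dist_triangle _ _ _
        _ ≤ ε + t₀ := by rw [g5]; linarith
        _ ≤ 5 * ε := by linarith [ht₁.2]
    · calc dist (η₁ T₁) (η₂ T₂) ≤ dist (η₁ T₁) (η₂ t₁) + dist (η₂ t₁) (η₂ T₂) := dist_triangle _ _ _
        _ ≤ ε + (T₂ - t₁) := by rw [g6, dist_comm]; linarith
        _ ≤ 5 * ε := by linarith [ht₀.1]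
  · -- reversed orientation: right of min
    rw [abs_of_nonneg (by linarith)] at hlow
    refine min_le_of_right_le (max_le ?_ ?_)
    · calc dist (η₁ 0) (η₂ T₂) ≤ dist (η₁ 0) (η₂ t₀) + dist (η₂ t₀) (η₂ T₂) := dist_triangle _ _ _
        _ ≤ ε + (T₂ - t₀) := by rw [g7]; linarith
        _ ≤ 5 * ε := by linarith [ht₁.1]
    · calc dist (η₁ T₁) (η₂ 0) ≤ dist (η₁ T₁) (η₂ t₁) + dist (η₂ t₁) (η₂ 0) := dist_triangle _ _ _
        _ ≤ ε + t₁ := by rw [g8, dist_comm]; linarith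
        _ ≤ 5 * ε := by linarith [ht₀.2]

/-- Two geodesics at Hausdorff distance at most `ε` have lengths within `2ε`,
and (after possibly reversing the time of `η₂`) endpoints within `5ε`. -/
theorem geodesics_hausdorff_close {X : Type*} [MetricSpace X] (ε T₁ T₂ : ℝ) (hε : 0 ≤ ε)
    (hT₁ : 0 ≤ T₁) (hT₂ : 0 ≤ T₂) (η₁ η₂ : ℝ → X)
    (h₁ : IsUnitSpeedGeodesic η₁ T₁) (h₂ : IsUnitSpeedGeodesic η₂ T₂)
    (hH : EMetric.hausdorffEdist (η₁ '' Set.Icc 0 T₁) (η₂ '' Set.Icc 0 T₂) ≤ ENNReal.ofReal ε) :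
    |T₁ - T₂| ≤ 2 * ε ∧
      ((dist (η₁ 0) (η₂ 0) ≤ 5 * ε ∧ dist (η₁ T₁) (η₂ T₂) ≤ 5 * ε) ∨
        (dist (η₁ 0) (η₂ T₂) ≤ 5 * ε ∧ dist (η₁ T₁) (η₂ 0) ≤ 5 * ε)) := by
  have key : ∀ δ : ℝ, 0 < δ →
      |T₁ - T₂| ≤ 2 * (ε + δ) ∧
        min (max (dist (η₁ 0) (η₂ 0)) (dist (η₁ T₁) (η₂ T₂)))
            (max (dist (η₁ 0) (η₂ T₂)) (dist (η₁ T₁) (η₂ 0))) ≤ 5 * (ε + δ) := by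
    intro δ hδ
    have hlt : ENNReal.ofReal ε < ENNReal.ofReal (ε + δ) := by
      rw [ENNReal.ofReal_lt_ofReal_iff (by linarith)]; linarith
    refine geodesics_near_aux (ε + δ) T₁ T₂ hT₁ hT₂ η₁ η₂ h₁ h₂ ?_ ?_
    · intro s hs
      have hmem : η₁ s ∈ η₁ '' Set.Icc 0 T₁ := Set.mem_image_of_mem _ hs
      have hlt1 : EMetric.infEdist (η₁ s) (η₂ '' Set.Icc 0 T₂) < ENNReal.ofReal (ε + δ) :=
        lt_of_le_of_lt (le_trans (EMetric.infEdist_le_hausdorffEdist_of_mem hmem) hH) hlt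
      unfold EMetric.infEdist at hlt1
      rw [EMetric.infEdist_lt_iff] at hlt1
      obtain ⟨y, hy, hdy⟩ := hlt1
      obtain ⟨t, ht, rfl⟩ := hy
      exact ⟨t, ht, le_of_lt ((edist_lt_ofReal).mp hdy)⟩
    · intro t ht
      have hmem : η₂ t ∈ η₂ '' Set.Icc 0 T₂ := Set.mem_image_of_mem _ ht
      have hlt1 : EMetric.infEdist (η₂ t) (η₁ '' Set.Icc 0 T₁) < ENNReal.ofReal (ε + δ) := by
        unfold EMetric.hausdorffEdist at hH
        rw [EMetric.hausdorffEdist_comm] at hH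
        exact lt_of_le_of_lt (le_trans (EMetric.infEdist_le_hausdorffEdist_of_mem hmem) hH) hlt
      unfold EMetric.infEdist at hlt1
      rw [EMetric.infEdist_lt_iff] at hlt1
      obtain ⟨y, hy, hdy⟩ := hlt1
      obtain ⟨s, hs, rfl⟩ := hy
      exact ⟨s, hs, le_of_lt ((edist_lt_ofReal).mp hdy)⟩
  constructor
  · refine le_of_forall_pos_le_add fun c hc => ?_
    have := (key (c / 2) (by linarith)).1
    linarith
  · have hmin : min (max (dist (η₁ 0) (η₂ 0)) (dist (η₁ T₁) (η₂ T₂)))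
        (max (dist (η₁ 0) (η₂ T₂)) (dist (η₁ T₁) (η₂ 0))) ≤ 5 * ε := by
      refine le_of_forall_pos_le_add fun c hc => ?_
      have := (key (c / 5) (by linarith)).2
      linarith
    rcases min_le_iff.mp hmin with h | h
    · exact Or.inl (max_le_iff.mp h)
    · exact Or.inr (max_le_iff.mp h)
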